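/- Suppose the fixed-point equation P₁ η* = P₂ v* holds with ŷ := P₁ η*, and suppose the magnitude-uniqueness hypothesis gives ŷ = e^{iθ} y₀ for some real θ, where y₀ = Ψ x₀ and |y₀| = b. If γ₁ = −1, then v* = y*, the phases of y* agree with those of ŷ, hence P₂ y* = e^{iθ} y₀; and if moreover γ₂ ≠ 0, then substituting into η* = (1+γ₂)P₂ y* − γ₂ y* and applying P₁ yields P₁ y* = e^{iθ} y₀ and Ψ* y* = e^{iθ} x₀. -/

import Mathlib

open Matrix

theorem stmt_10 {m n : ℕ} (Ψ : Matrix (Fin m) (Fin n) ℂ) (hΨ : Ψᴴ * Ψ = 1)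
    (b : Fin m → ℝ) (hb : ∀ j, 0 < b j)
    (P₁ : (Fin m → ℂ) → (Fin m → ℂ)) (hP₁ : ∀ z, P₁ z = (Ψ * Ψᴴ).mulVec z)
    (P₂ : (Fin m → ℂ) → (Fin m → ℂ))
    (hP₂ : ∀ z j, P₂ z j = (b j : ℂ) * (z j / (‖z j‖ : ℂ)))
    (x₀ : Fin n → ℂ) (y₀ : Fin m → ℂ) (hy₀ : y₀ = Ψ.mulVec x₀)
    (hmag : ∀ j, ‖y₀ j‖ = b j)
    (γ₁ γ₂ : ℝ) (hγ₁ : γ₁ = -1)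
    (ystar vstar ηstar yhat : Fin m → ℂ)
    (hv : vstar = fun j => (1 + γ₁ : ℂ) * P₁ ystar j - (γ₁ : ℂ) * ystar j)
    (hη : ηstar = fun j => (1 + γ₂ : ℂ) * P₂ ystar j - (γ₂ : ℂ) * ystar j)
    (hfix : P₁ ηstar = P₂ vstar)
    (hyhat : yhat = P₁ ηstar)
    (θ : ℝ) (huniq : yhat = fun j => Complex.exp (θ * Complex.I) * y₀ j)
    (hynz : ∀ j, ystar j ≠ 0) :
    vstar = ystar ∧
    P₂ ystar = (fun j => Complex.exp (θ * Complex.I) * y₀ j) ∧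
    (γ₂ ≠ 0 →
      P₁ ystar = (fun j => Complex.exp (θ * Complex.I) * y₀ j) ∧
      Ψᴴ.mulVec ystar = fun k => Complex.exp (θ * Complex.I) * x₀ k) := by
  set c : ℂ := Complex.exp (θ * Complex.I) with hc
  -- v* = y*
  have hvs : vstar = ystar := by
    funext j
    rw [hv]
    simp [hγ₁]
  -- P₂ y* = c • y₀
  have hP2y : P₂ ystar = (fun j => c * y₀ j) := by
    rw [← hvs, ← hfix, ← hyhat, huniq]
  -- P₁ y₀ = y₀
  have hMy₀ : (Ψ * Ψᴴ).mulVec y₀ = y₀ := by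
    rw [hy₀, Matrix.mulVec_mulVec, Matrix.mul_assoc, hΨ, Matrix.mul_one]
  refine ⟨hvs, hP2y, fun hγ₂ => ?_⟩
  have hγ₂' : (γ₂ : ℂ) ≠ 0 := by exact_mod_cast hγ₂
  -- rewrite η*
  have hη' : ηstar = (1 + (γ₂ : ℂ)) • (c • y₀) - (γ₂ : ℂ) • ystar := by
    funext j
    rw [hη]
    simp only [Pi.sub_apply, Pi.smul_apply, smul_eq_mul]
    rw [show P₂ ystar j = c * y₀ j from congrFun hP2y j]
  have hkey : (fun j => c * y₀ j) = (Ψ * Ψᴴ).mulVec ηstar := by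
    rw [← hP₁, ← hyhat, huniq]
  have hP1η : (Ψ * Ψᴴ).mulVec ηstar
      = (1 + (γ₂ : ℂ)) • (c • y₀) - (γ₂ : ℂ) • ((Ψ * Ψᴴ).mulVec ystar) := by
    rw [hη', Matrix.mulVec_sub, Matrix.mulVec_smul, Matrix.mulVec_smul,
      Matrix.mulVec_smul, hMy₀]
  have hcy : (fun j => c * y₀ j) = c • y₀ := by
    funext j; simp
  have hP1y : (Ψ * Ψᴴ).mulVec ystar = c • y₀ := by
    have h := hkey
    rw [hP1η, hcy] at h
    have h2 : (γ₂ : ℂ) • ((Ψ * Ψᴴ).mulVec ystar) = (γ₂ : ℂ) • (c • y₀) := by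
      linear_combination (norm := module) h
    exact smul_right_injective _ hγ₂' h2
  constructor
  · rw [hP₁, hP1y, hcy]
  · funext k
    have h3 : Ψᴴ.mulVec ((Ψ * Ψᴴ).mulVec ystar) = Ψᴴ.mulVec ystar := by
      rw [Matrix.mulVec_mulVec, ← Matrix.mul_assoc, hΨ, Matrix.one_mul]
    have h4 : Ψᴴ.mulVec (c • y₀) = c • x₀ := by
      rw [hy₀, Matrix.mulVec_smul, Matrix.mulVec_mulVec, hΨ, Matrix.one_mulVec]
    rw [← h3, hP1y, h4]
    simp
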